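/- Let (a^t, b^t)_{t≥0} denote the re-parameterized Population EM iterates for Model 2. If a^0 = 0, then a^t = 0 for every t ≥ 0, and moreover for every t ≥ 0 the b-iterate satisfies b^{t+1} = ∫_{ℝ^d} (2·w_d(y, b^t) − 1)·y·g(y) dy, where g(y) = (φ_d(y − θ*) + φ_d(y + θ*))/2 is the density of the mixture 0.5·N(−θ*, I_d) + 0.5·N(θ*, I_d); i.e., the recursion for b^t coincides with the Population EM update for Model 1. -/

import Mathlib

open MeasureTheory Real Filter InnerProductGeometry RealInnerProductSpace

/-- Standard Gaussian density on `ℝ^d` (identity covariance, mean zero). -/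
noncomputable def gpdf (d : ℕ) (x : EuclideanSpace ℝ (Fin d)) : ℝ :=
  (2 * π) ^ (-(d : ℝ) / 2) * Real.exp (-‖x‖ ^ 2 / 2)

/-- `w_d(y, θ) = φ_d(y − θ)/(φ_d(y − θ) + φ_d(y + θ))`. -/
noncomputable def w1 (d : ℕ) (y θ : EuclideanSpace ℝ (Fin d)) : ℝ :=
  gpdf d (y - θ) / (gpdf d (y - θ) + gpdf d (y + θ))

/-- The density of the mixture `0.5 N(−θ*, I_d) + 0.5 N(θ*, I_d)`. -/
noncomputable def mix1 (d : ℕ) (θs y : EuclideanSpace ℝ (Fin d)) : ℝ :=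
  (gpdf d (y - θs) + gpdf d (y + θs)) / 2

/-- Population EM iterates for Model 1:
`θ^{t+1} = ∫ (2 w_d(y, θ^t) − 1) · y · f(y) dy`. -/
noncomputable def em1 (d : ℕ) (θs θ0 : EuclideanSpace ℝ (Fin d)) :
    ℕ → EuclideanSpace ℝ (Fin d)
  | 0 => θ0
  | t + 1 => ∫ y, ((2 * w1 d y (em1 d θs θ0 t) - 1) * mix1 d θs y) • y

/-- `v_d(y, μ1, μ2) = φ_d(y − μ1)/(φ_d(y − μ1) + φ_d(y − μ2))`. -/
noncomputable def v2 (d : ℕ) (y μ1 μ2 : EuclideanSpace ℝ (Fin d)) : ℝ :=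
  gpdf d (y - μ1) / (gpdf d (y - μ1) + gpdf d (y - μ2))

/-- The density of the mixture `0.5 N(μ1*, I_d) + 0.5 N(μ2*, I_d)`. -/
noncomputable def mix2 (d : ℕ) (μ1s μ2s y : EuclideanSpace ℝ (Fin d)) : ℝ :=
  (gpdf d (y - μ1s) + gpdf d (y - μ2s)) / 2

/-- Population EM iterates `(μ1^t, μ2^t)` for Model 2. -/
noncomputable def em2 (d : ℕ) (μ1s μ2s μ10 μ20 : EuclideanSpace ℝ (Fin d)) :
    ℕ → EuclideanSpace ℝ (Fin d) × EuclideanSpace ℝ (Fin d)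
  | 0 => (μ10, μ20)
  | t + 1 =>
    let p := em2 d μ1s μ2s μ10 μ20 t
    ((∫ y, v2 d y p.1 p.2 * mix2 d μ1s μ2s y)⁻¹ •
        ∫ y, (v2 d y p.1 p.2 * mix2 d μ1s μ2s y) • y,
     (∫ y, (1 - v2 d y p.1 p.2) * mix2 d μ1s μ2s y)⁻¹ •
        ∫ y, ((1 - v2 d y p.1 p.2) * mix2 d μ1s μ2s y) • y)

/-- Re-parameterized iterate `a^t = (μ1^t + μ2^t)/2 − (μ1* + μ2*)/2`. -/
noncomputable def aIter (d : ℕ) (μ1s μ2s μ10 μ20 : EuclideanSpace ℝ (Fin d)) (t : ℕ) :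
    EuclideanSpace ℝ (Fin d) :=
  (2:ℝ)⁻¹ • ((em2 d μ1s μ2s μ10 μ20 t).1 + (em2 d μ1s μ2s μ10 μ20 t).2) -
    (2:ℝ)⁻¹ • (μ1s + μ2s)

/-- Re-parameterized iterate `b^t = (μ2^t − μ1^t)/2`. -/
noncomputable def bIter (d : ℕ) (μ1s μ2s μ10 μ20 : EuclideanSpace ℝ (Fin d)) (t : ℕ) :
    EuclideanSpace ℝ (Fin d) :=
  (2:ℝ)⁻¹ • ((em2 d μ1s μ2s μ10 μ20 t).2 - (em2 d μ1s μ2s μ10 μ20 t).1)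

/-- `θ* = (μ2* − μ1*)/2`. -/
noncomputable def thetaStar (d : ℕ) (μ1s μ2s : EuclideanSpace ℝ (Fin d)) :
    EuclideanSpace ℝ (Fin d) :=
  (2:ℝ)⁻¹ • (μ2s - μ1s)

section Aux
variable {d : ℕ}

local notation "E" => EuclideanSpace ℝ (Fin d)

lemma gpdf_pos (x : E) : 0 < gpdf d x := by
  have := Real.pi_pos
  unfold gpdf; positivity

lemma gpdf_neg (x : E) : gpdf d (-x) = gpdf d x := by
  unfold gpdf; rw [norm_neg]

lemma continuous_gpdf : Continuous (gpdf d) := by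
  unfold gpdf; fun_prop

lemma gpdf_eq (x : E) : gpdf d x = (2*π) ^ (-(d:ℝ)/2) * rexp (-(2⁻¹ : ℝ) * ‖x‖^2) := by
  unfold gpdf; ring_nf

lemma integrable_rexp_norm_sq {b : ℝ} (hb : 0 < b) :
    Integrable (fun x : E => rexp (-b * ‖x‖^2)) := by
  have h := GaussianFourier.integrable_cexp_neg_mul_sq_norm_add (V := E)
    (b := (b:ℂ)) (by rwa [Complex.ofReal_re]) 0 (0 : E)
  have h2 := h.re
  refine h2.congr (Filter.Eventually.of_forall fun x => ?_)
  have e1 : (-(b:ℂ) * (‖x‖:ℂ)^2 + 0 * ((inner ℝ (0 : E) x : ℝ) : ℂ))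
      = ((-b * ‖x‖^2 : ℝ) : ℂ) := by push_cast; ring
  beta_reduce
  rw [e1, RCLike.re_to_complex]
  exact Complex.exp_ofReal_re (-b * ‖x‖^2)

lemma integrable_gpdf : Integrable (gpdf d) := by
  have h : Integrable (fun x : E => (2*π) ^ (-(d:ℝ)/2) * rexp (-(2⁻¹:ℝ) * ‖x‖^2)) :=
    (integrable_rexp_norm_sq (by norm_num)).const_mul _
  exact h.congr (Filter.Eventually.of_forall fun x => (gpdf_eq x).symm)

lemma integral_gpdf : ∫ x : E, gpdf d x = 1 := by
  have h : ∫ x : E, gpdf d x = ∫ x : E, (2*π) ^ (-(d:ℝ)/2) * rexp (-(2⁻¹:ℝ) * ‖x‖^2) :=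
    integral_congr_ae (Filter.Eventually.of_forall fun x => gpdf_eq x)
  rw [h, MeasureTheory.integral_const_mul,
    GaussianFourier.integral_rexp_neg_mul_sq_norm (by norm_num : (0:ℝ) < 2⁻¹)]
  have : (π / 2⁻¹ : ℝ) = 2 * π := by ring
  rw [this, finrank_euclideanSpace_fin, ← Real.rpow_add (by positivity),
    show (-(d:ℝ)/2 + (d:ℝ)/2) = 0 by ring, Real.rpow_zero]

lemma integrable_gpdf_smul : Integrable (fun x : E => gpdf d x • x) := by
  have hbd : Integrable (fun x : E => (2*π) ^ (-(d:ℝ)/2) * rexp (-(4⁻¹:ℝ) * ‖x‖^2)) :=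
    (integrable_rexp_norm_sq (b := 4⁻¹) (by norm_num)).const_mul _
  refine hbd.mono' ((continuous_gpdf.smul continuous_id).aestronglyMeasurable) ?_
  refine Filter.Eventually.of_forall fun x => ?_
  rw [norm_smul, Real.norm_eq_abs, abs_of_pos (gpdf_pos x), gpdf_eq]
  have h1 : ‖x‖ ≤ rexp ((4:ℝ)⁻¹ * ‖x‖^2) := by
    have := Real.add_one_le_exp ((4:ℝ)⁻¹ * ‖x‖^2)
    nlinarith [norm_nonneg x, sq_nonneg (‖x‖ - 2)]
  have hC : (0:ℝ) < (2*π) ^ (-(d:ℝ)/2) := by have := Real.pi_pos; positivity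
  calc (2*π) ^ (-(d:ℝ)/2) * rexp (-(2⁻¹:ℝ) * ‖x‖^2) * ‖x‖
      ≤ (2*π) ^ (-(d:ℝ)/2) * rexp (-(2⁻¹:ℝ) * ‖x‖^2) * rexp ((4:ℝ)⁻¹ * ‖x‖^2) := by
        exact mul_le_mul_of_nonneg_left h1 (by positivity)
    _ = (2*π) ^ (-(d:ℝ)/2) * rexp (-(4⁻¹:ℝ) * ‖x‖^2) := by
        rw [mul_assoc, ← Real.exp_add]; ring_nf

lemma integrable_gpdf_shift (μ : E) : Integrable (fun y : E => gpdf d (y - μ)) :=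
  integrable_gpdf.comp_sub_right μ

lemma integral_gpdf_shift (μ : E) : ∫ y : E, gpdf d (y - μ) = 1 := by
  rw [integral_sub_right_eq_self (gpdf d) μ, integral_gpdf]

lemma integrable_gpdf_shift_smul (μ : E) : Integrable (fun y : E => gpdf d (y - μ) • y) := by
  have h : Integrable (fun z : E => gpdf d z • (z + μ)) := by
    simp only [smul_add]
    exact integrable_gpdf_smul.add (integrable_gpdf.smul_const μ)
  have h2 := h.comp_sub_right μ
  refine h2.congr (Filter.Eventually.of_forall fun y => ?_)
  simp

end Aux

section Aux2
variable {d : ℕ}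

local notation "E" => EuclideanSpace ℝ (Fin d)

lemma integrable_gpdf_shift' (μ : E) : Integrable (fun y : E => gpdf d (y + μ)) := by
  have := integrable_gpdf_shift (d := d) (-μ)
  refine this.congr (Filter.Eventually.of_forall fun y => ?_)
  beta_reduce
  rw [sub_neg_eq_add]

lemma integral_gpdf_shift' (μ : E) : ∫ y : E, gpdf d (y + μ) = 1 := by
  rw [integral_add_right_eq_self (gpdf d) μ, integral_gpdf]

lemma integrable_gpdf_shift_smul' (μ : E) : Integrable (fun y : E => gpdf d (y + μ) • y) := by
  have := integrable_gpdf_shift_smul (d := d) (-μ)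
  refine this.congr (Filter.Eventually.of_forall fun y => ?_)
  beta_reduce
  rw [sub_neg_eq_add]

lemma w1_denom_pos (z b : E) : 0 < gpdf d (z - b) + gpdf d (z + b) :=
  add_pos (gpdf_pos _) (gpdf_pos _)

lemma w1_nonneg (z b : E) : 0 ≤ w1 d z b :=
  div_nonneg (gpdf_pos _).le (w1_denom_pos z b).le

lemma w1_le_one (z b : E) : w1 d z b ≤ 1 := by
  rw [w1, div_le_one (w1_denom_pos z b)]
  linarith [gpdf_pos (d := d) (z + b)]

lemma gdiv_helper {A B : ℝ} (hA : 0 < A) (hB : 0 < B) : B / (B + A) = 1 - A / (A + B) := by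
  rw [eq_sub_iff_add_eq, div_add_div _ _ (by positivity : B + A ≠ 0) (by positivity : A + B ≠ 0),
    div_eq_one_iff_eq (by positivity)]
  ring

lemma w1_neg_arg (z b : E) : w1 d (-z) b = 1 - w1 d z b := by
  have h1 : -z - b = -(z + b) := by abel
  have h2 : -z + b = -(z - b) := by abel
  rw [w1, w1, h1, h2, gpdf_neg, gpdf_neg]
  exact gdiv_helper (gpdf_pos _) (gpdf_pos _)

lemma continuous_w1 (b : E) : Continuous fun z : E => w1 d z b := by
  apply Continuous.div
  · exact continuous_gpdf.comp (continuous_id.sub continuous_const)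
  · exact (continuous_gpdf.comp (continuous_id.sub continuous_const)).add
      (continuous_gpdf.comp (continuous_id.add continuous_const))
  · exact fun z => (w1_denom_pos z b).ne'

lemma mix1_neg_arg (θs z : E) : mix1 d θs (-z) = mix1 d θs z := by
  rw [mix1, mix1, show -z - θs = -(z + θs) by abel, show -z + θs = -(z - θs) by abel,
    gpdf_neg, gpdf_neg, add_comm]

lemma mix1_pos (θs z : E) : 0 < mix1 d θs z := by
  have h1 := gpdf_pos (d := d) (z - θs)
  have h2 := gpdf_pos (d := d) (z + θs)
  rw [mix1]; positivity

lemma continuous_mix1 (θs : E) : Continuous (mix1 d θs) := by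
  apply Continuous.div_const
  exact (continuous_gpdf.comp (continuous_id.sub continuous_const)).add
    (continuous_gpdf.comp (continuous_id.add continuous_const))

lemma integrable_mix1 (θs : E) : Integrable (mix1 d θs) := by
  have h : Integrable (fun y : E => (gpdf d (y - θs) + gpdf d (y + θs)) / 2) :=
    ((integrable_gpdf_shift θs).add (integrable_gpdf_shift' θs)).div_const 2
  exact h.congr (Filter.Eventually.of_forall fun y => rfl)

lemma integral_mix1 (θs : E) : ∫ z : E, mix1 d θs z = 1 := by
  have h : ∫ z : E, mix1 d θs z = ∫ z : E, (gpdf d (z - θs) + gpdf d (z + θs)) / 2 := rfl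
  rw [h, integral_div, integral_add (integrable_gpdf_shift θs) (integrable_gpdf_shift' θs),
    integral_gpdf_shift, integral_gpdf_shift']
  norm_num

lemma integrable_mix1_smul (θs : E) : Integrable (fun z : E => mix1 d θs z • z) := by
  have h : Integrable (fun z : E =>
      ((2:ℝ)⁻¹ • (gpdf d (z - θs) • z)) + ((2:ℝ)⁻¹ • (gpdf d (z + θs) • z))) :=
    ((integrable_gpdf_shift_smul θs).smul (2:ℝ)⁻¹).add
      ((integrable_gpdf_shift_smul' θs).smul (2:ℝ)⁻¹)
  refine h.congr (Filter.Eventually.of_forall fun z => ?_)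
  beta_reduce
  rw [mix1, smul_smul, smul_smul, ← add_smul]
  congr 1
  ring

lemma integral_mix1_smul_zero (θs : E) : ∫ z : E, mix1 d θs z • z = 0 := by
  have h1 : ∫ z : E, mix1 d θs (-z) • (-z) = ∫ z : E, mix1 d θs z • z :=
    integral_neg_eq_self (fun z : E => mix1 d θs z • z) volume
  have h2 : ∫ z : E, mix1 d θs (-z) • (-z) = ∫ z : E, -(mix1 d θs z • z) :=
    integral_congr_ae (Filter.Eventually.of_forall fun z => by
      beta_reduce
      rw [mix1_neg_arg, smul_neg])
  rw [h2, integral_neg] at h1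
  have h3 : (2:ℝ) • ∫ z : E, mix1 d θs z • z = 0 := by
    rw [two_smul]
    nth_rewrite 1 [← h1]
    simp
  have h4 := smul_eq_zero.mp h3
  simpa using h4

lemma integrable_w1_mul (θs b : E) (ρ : E → ℝ) (hc : Continuous ρ) (hbd : ∀ x, |ρ x| ≤ 1) :
    Integrable (fun z : E => ρ z * mix1 d θs z) := by
  refine (integrable_mix1 θs).mono'
    ((hc.mul (continuous_mix1 θs)).aestronglyMeasurable)
    (Filter.Eventually.of_forall fun z => ?_)
  rw [norm_mul]
  calc ‖ρ z‖ * ‖mix1 d θs z‖ ≤ 1 * ‖mix1 d θs z‖ :=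
        mul_le_mul_of_nonneg_right (hbd z) (norm_nonneg _)
    _ = mix1 d θs z := by rw [one_mul, Real.norm_eq_abs, abs_of_pos (mix1_pos θs z)]

lemma integrable_w1_smul (θs b : E) (ρ : E → ℝ) (hc : Continuous ρ) (hbd : ∀ x, |ρ x| ≤ 1) :
    Integrable (fun z : E => (ρ z * mix1 d θs z) • z) := by
  refine (integrable_mix1_smul θs).norm.mono'
    (((hc.mul (continuous_mix1 θs)).smul continuous_id).aestronglyMeasurable)
    (Filter.Eventually.of_forall fun z => ?_)
  rw [norm_smul, norm_mul, norm_smul]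
  have h1 : ‖ρ z‖ * ‖mix1 d θs z‖ ≤ 1 * ‖mix1 d θs z‖ :=
    mul_le_mul_of_nonneg_right (hbd z) (norm_nonneg _)
  calc ‖ρ z‖ * ‖mix1 d θs z‖ * ‖z‖ ≤ 1 * ‖mix1 d θs z‖ * ‖z‖ :=
        mul_le_mul_of_nonneg_right h1 (norm_nonneg _)
    _ = ‖mix1 d θs z‖ * ‖z‖ := by rw [one_mul]

lemma abs_w1_le (z b : E) : |w1 d z b| ≤ 1 :=
  abs_le.mpr ⟨by linarith [w1_nonneg z b], w1_le_one z b⟩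

lemma abs_one_sub_w1_le (z b : E) : |1 - w1 d z b| ≤ 1 :=
  abs_le.mpr ⟨by linarith [w1_le_one z b], by linarith [w1_nonneg z b]⟩

lemma abs_two_w1_sub_one_le (z b : E) : |2 * w1 d z b - 1| ≤ 1 :=
  abs_le.mpr ⟨by linarith [w1_nonneg z b], by linarith [w1_le_one z b]⟩

lemma integral_w1_mix1 (θs b : E) : ∫ z : E, w1 d z b * mix1 d θs z = 1/2 := by
  have hint1 : Integrable (fun z : E => w1 d z b * mix1 d θs z) :=
    integrable_w1_mul θs b _ (continuous_w1 b) (fun z => abs_w1_le z b)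
  have hint2 : Integrable (fun z : E => (1 - w1 d z b) * mix1 d θs z) :=
    integrable_w1_mul θs b _ (continuous_const.sub (continuous_w1 b))
      (fun z => abs_one_sub_w1_le z b)
  have hsym : ∫ z : E, (1 - w1 d z b) * mix1 d θs z = ∫ z : E, w1 d z b * mix1 d θs z := by
    rw [← integral_neg_eq_self (fun z : E => w1 d z b * mix1 d θs z) volume]
    refine integral_congr_ae (Filter.Eventually.of_forall fun z => ?_)
    beta_reduce
    rw [w1_neg_arg, mix1_neg_arg]
  have hadd : (∫ z : E, w1 d z b * mix1 d θs z) + ∫ z : E, (1 - w1 d z b) * mix1 d θs z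
      = 1 := by
    rw [← integral_add hint1 hint2]
    have : ∀ z : E, w1 d z b * mix1 d θs z + (1 - w1 d z b) * mix1 d θs z = mix1 d θs z :=
      fun z => by ring
    rw [integral_congr_ae (Filter.Eventually.of_forall this), integral_mix1]
  rw [hsym] at hadd
  linarith

lemma integral_one_sub_w1_mix1 (θs b : E) :
    ∫ z : E, (1 - w1 d z b) * mix1 d θs z = 1/2 := by
  have hsym : ∫ z : E, (1 - w1 d z b) * mix1 d θs z = ∫ z : E, w1 d z b * mix1 d θs z := by
    rw [← integral_neg_eq_self (fun z : E => w1 d z b * mix1 d θs z) volume]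
    refine integral_congr_ae (Filter.Eventually.of_forall fun z => ?_)
    beta_reduce
    rw [w1_neg_arg, mix1_neg_arg]
  rw [hsym, integral_w1_mix1]

lemma integral_one_sub_w1_smul (θs b : E) :
    ∫ z : E, ((1 - w1 d z b) * mix1 d θs z) • z
      = - ∫ z : E, (w1 d z b * mix1 d θs z) • z := by
  have h1 : ∫ z : E, (w1 d (-z) b * mix1 d θs (-z)) • (-z)
      = ∫ z : E, (w1 d z b * mix1 d θs z) • z :=
    integral_neg_eq_self (fun z : E => (w1 d z b * mix1 d θs z) • z) volume
  have h2 : ∫ z : E, (w1 d (-z) b * mix1 d θs (-z)) • (-z)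
      = ∫ z : E, -(((1 - w1 d z b) * mix1 d θs z) • z) :=
    integral_congr_ae (Filter.Eventually.of_forall fun z => by
      beta_reduce
      rw [w1_neg_arg, mix1_neg_arg, smul_neg])
  rw [h2, integral_neg] at h1
  rw [← h1, neg_neg]

lemma integral_two_w1_smul (θs b : E) :
    ∫ z : E, ((2 * w1 d z b - 1) * mix1 d θs z) • z
      = (2:ℝ) • ∫ z : E, (w1 d z b * mix1 d θs z) • z := by
  have hint : Integrable (fun z : E => (w1 d z b * mix1 d θs z) • z) :=
    integrable_w1_smul θs b _ (continuous_w1 b) (fun z => abs_w1_le z b)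
  have h1 : ∀ z : E, ((2 * w1 d z b - 1) * mix1 d θs z) • z
      = ((w1 d z b * mix1 d θs z) • z + (w1 d z b * mix1 d θs z) • z) - mix1 d θs z • z := by
    intro z
    rw [← add_smul, ← sub_smul]
    congr 1
    ring
  have hA : Integrable (fun z : E =>
      (w1 d z b * mix1 d θs z) • z + (w1 d z b * mix1 d θs z) • z) := hint.add hint
  rw [integral_congr_ae (Filter.Eventually.of_forall h1),
    integral_sub hA (integrable_mix1_smul θs),
    integral_add hint hint, integral_mix1_smul_zero, sub_zero, two_smul ℝ]

lemma v2_eq (c b y : E) : v2 d y (c - b) (c + b) = 1 - w1 d (y - c) b := by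
  rw [v2, w1, show y - (c - b) = (y - c) + b by abel, show y - (c + b) = (y - c) - b by abel]
  exact gdiv_helper (gpdf_pos _) (gpdf_pos _)

lemma one_sub_v2_eq (c b y : E) : 1 - v2 d y (c - b) (c + b) = w1 d (y - c) b := by
  rw [v2_eq]; ring

lemma mix2_eq (c θs y : E) : mix2 d (c - θs) (c + θs) y = mix1 d θs (y - c) := by
  rw [mix2, mix1, show y - (c - θs) = (y - c) + θs by abel,
    show y - (c + θs) = (y - c) - θs by abel, add_comm]

end Aux2

section Aux3
variable {d : ℕ}

local notation "E" => EuclideanSpace ℝ (Fin d)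

lemma integral_v2_denom (c θs b : E) :
    ∫ y : E, v2 d y (c - b) (c + b) * mix2 d (c - θs) (c + θs) y = 1/2 := by
  have h : ∀ y : E, v2 d y (c - b) (c + b) * mix2 d (c - θs) (c + θs) y
      = (fun z : E => (1 - w1 d z b) * mix1 d θs z) (y - c) := fun y => by
    beta_reduce; rw [v2_eq, mix2_eq]
  rw [integral_congr_ae (Filter.Eventually.of_forall h),
    integral_sub_right_eq_self (fun z : E => (1 - w1 d z b) * mix1 d θs z) c,
    integral_one_sub_w1_mix1]

lemma integral_v2_num (c θs b : E) :
    ∫ y : E, (v2 d y (c - b) (c + b) * mix2 d (c - θs) (c + θs) y) • y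
      = (2:ℝ)⁻¹ • c - ∫ z : E, (w1 d z b * mix1 d θs z) • z := by
  have h : ∀ y : E, (v2 d y (c - b) (c + b) * mix2 d (c - θs) (c + θs) y) • y
      = (fun z : E => ((1 - w1 d z b) * mix1 d θs z) • (z + c)) (y - c) := fun y => by
    beta_reduce; rw [v2_eq, mix2_eq, sub_add_cancel]
  rw [integral_congr_ae (Filter.Eventually.of_forall h),
    integral_sub_right_eq_self (fun z : E => ((1 - w1 d z b) * mix1 d θs z) • (z + c)) c]
  have hint1 : Integrable (fun z : E => ((1 - w1 d z b) * mix1 d θs z) • z) :=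
    integrable_w1_smul θs b _ (continuous_const.sub (continuous_w1 b))
      (fun z => abs_one_sub_w1_le z b)
  have hint2 : Integrable (fun z : E => ((1 - w1 d z b) * mix1 d θs z) • c) :=
    (integrable_w1_mul θs b _ (continuous_const.sub (continuous_w1 b))
      (fun z => abs_one_sub_w1_le z b)).smul_const c
  have h2 : ∀ z : E, ((1 - w1 d z b) * mix1 d θs z) • (z + c)
      = ((1 - w1 d z b) * mix1 d θs z) • z + ((1 - w1 d z b) * mix1 d θs z) • c :=
    fun z => smul_add _ _ _
  rw [integral_congr_ae (Filter.Eventually.of_forall h2), integral_add hint1 hint2,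
    integral_one_sub_w1_smul, integral_smul_const, integral_one_sub_w1_mix1,
    show ((1:ℝ)/2) = (2:ℝ)⁻¹ by norm_num]
  abel

lemma integral_v2_denom2 (c θs b : E) :
    ∫ y : E, (1 - v2 d y (c - b) (c + b)) * mix2 d (c - θs) (c + θs) y = 1/2 := by
  have h : ∀ y : E, (1 - v2 d y (c - b) (c + b)) * mix2 d (c - θs) (c + θs) y
      = (fun z : E => w1 d z b * mix1 d θs z) (y - c) := fun y => by
    beta_reduce; rw [one_sub_v2_eq, mix2_eq]
  rw [integral_congr_ae (Filter.Eventually.of_forall h),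
    integral_sub_right_eq_self (fun z : E => w1 d z b * mix1 d θs z) c, integral_w1_mix1]

lemma integral_v2_num2 (c θs b : E) :
    ∫ y : E, ((1 - v2 d y (c - b) (c + b)) * mix2 d (c - θs) (c + θs) y) • y
      = (2:ℝ)⁻¹ • c + ∫ z : E, (w1 d z b * mix1 d θs z) • z := by
  have h : ∀ y : E, ((1 - v2 d y (c - b) (c + b)) * mix2 d (c - θs) (c + θs) y) • y
      = (fun z : E => (w1 d z b * mix1 d θs z) • (z + c)) (y - c) := fun y => by
    beta_reduce; rw [one_sub_v2_eq, mix2_eq, sub_add_cancel]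
  rw [integral_congr_ae (Filter.Eventually.of_forall h),
    integral_sub_right_eq_self (fun z : E => (w1 d z b * mix1 d θs z) • (z + c)) c]
  have hint1 : Integrable (fun z : E => (w1 d z b * mix1 d θs z) • z) :=
    integrable_w1_smul θs b _ (continuous_w1 b) (fun z => abs_w1_le z b)
  have hint2 : Integrable (fun z : E => (w1 d z b * mix1 d θs z) • c) :=
    (integrable_w1_mul θs b _ (continuous_w1 b) (fun z => abs_w1_le z b)).smul_const c
  have h2 : ∀ z : E, (w1 d z b * mix1 d θs z) • (z + c)
      = (w1 d z b * mix1 d θs z) • z + (w1 d z b * mix1 d θs z) • c :=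
    fun z => smul_add _ _ _
  rw [integral_congr_ae (Filter.Eventually.of_forall h2), integral_add hint1 hint2,
    integral_smul_const, integral_w1_mix1, show ((1:ℝ)/2) = (2:ℝ)⁻¹ by norm_num]
  abel

lemma em2_next (c θs b μA μB : E) (hA : μA = c - θs) (hB : μB = c + θs) :
    ((∫ y : E, v2 d y (c - b) (c + b) * mix2 d μA μB y)⁻¹ •
        ∫ y : E, (v2 d y (c - b) (c + b) * mix2 d μA μB y) • y
      = c - (2:ℝ) • ∫ z : E, (w1 d z b * mix1 d θs z) • z) ∧
    ((∫ y : E, (1 - v2 d y (c - b) (c + b)) * mix2 d μA μB y)⁻¹ •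
        ∫ y : E, ((1 - v2 d y (c - b) (c + b)) * mix2 d μA μB y) • y
      = c + (2:ℝ) • ∫ z : E, (w1 d z b * mix1 d θs z) • z) := by
  subst hA hB
  rw [integral_v2_denom, integral_v2_num, integral_v2_denom2, integral_v2_num2]
  constructor
  · module
  · module

end Aux3

/-- If `a^0 = 0` then `a^t = 0` for all `t`, and the recursion for `b^t` coincides with
the Population EM update for Model 1 with true parameter `θ* = (μ2* − μ1*)/2`. -/
theorem stmt9 (d : ℕ) (hd : 1 ≤ d) (μ1s μ2s μ10 μ20 : EuclideanSpace ℝ (Fin d))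
    (ha0 : aIter d μ1s μ2s μ10 μ20 0 = 0) :
    (∀ t : ℕ, aIter d μ1s μ2s μ10 μ20 t = 0) ∧
    (∀ t : ℕ, bIter d μ1s μ2s μ10 μ20 (t + 1) =
      ∫ y, ((2 * w1 d y (bIter d μ1s μ2s μ10 μ20 t) - 1) *
        mix1 d (thetaStar d μ1s μ2s) y) • y) := by
  have hA : μ1s = (2:ℝ)⁻¹ • (μ1s + μ2s) - thetaStar d μ1s μ2s := by
    rw [thetaStar]; module
  have hB : μ2s = (2:ℝ)⁻¹ • (μ1s + μ2s) + thetaStar d μ1s μ2s := by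
    rw [thetaStar]; module
  have step : ∀ t : ℕ, em2 d μ1s μ2s μ10 μ20 t =
      ((2:ℝ)⁻¹ • (μ1s + μ2s) - bIter d μ1s μ2s μ10 μ20 t,
       (2:ℝ)⁻¹ • (μ1s + μ2s) + bIter d μ1s μ2s μ10 μ20 t) →
      em2 d μ1s μ2s μ10 μ20 (t + 1) =
      ((2:ℝ)⁻¹ • (μ1s + μ2s) - (2:ℝ) • ∫ z, (w1 d z (bIter d μ1s μ2s μ10 μ20 t) *
          mix1 d (thetaStar d μ1s μ2s) z) • z,
       (2:ℝ)⁻¹ • (μ1s + μ2s) + (2:ℝ) • ∫ z, (w1 d z (bIter d μ1s μ2s μ10 μ20 t) *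
          mix1 d (thetaStar d μ1s μ2s) z) • z) := by
    intro t ht
    have key := em2_next ((2:ℝ)⁻¹ • (μ1s + μ2s)) (thetaStar d μ1s μ2s)
      (bIter d μ1s μ2s μ10 μ20 t) μ1s μ2s hA hB
    rw [Prod.ext_iff]
    constructor
    · show (em2 d μ1s μ2s μ10 μ20 (t + 1)).1 = _
      simp only [em2, ht]
      exact key.1
    · show (em2 d μ1s μ2s μ10 μ20 (t + 1)).2 = _
      simp only [em2, ht]
      exact key.2
  have main : ∀ t : ℕ, em2 d μ1s μ2s μ10 μ20 t =
      ((2:ℝ)⁻¹ • (μ1s + μ2s) - bIter d μ1s μ2s μ10 μ20 t,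
       (2:ℝ)⁻¹ • (μ1s + μ2s) + bIter d μ1s μ2s μ10 μ20 t) := by
    intro t
    induction t with
    | zero =>
      simp only [aIter, em2] at ha0
      rw [sub_eq_zero] at ha0
      simp only [bIter, em2]
      rw [Prod.ext_iff]
      constructor
      · show μ10 = _
        rw [← ha0]; module
      · show μ20 = _
        rw [← ha0]; module
    | succ t ih =>
      have hstep := step t ih
      have hbsucc : bIter d μ1s μ2s μ10 μ20 (t + 1)
          = (2:ℝ) • ∫ z, (w1 d z (bIter d μ1s μ2s μ10 μ20 t) *
              mix1 d (thetaStar d μ1s μ2s) z) • z := by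
        simp only [bIter, hstep]
        module
      rw [hstep, hbsucc]
  refine ⟨fun t => ?_, fun t => ?_⟩
  · simp only [aIter, main t]
    module
  · have hstep := step t (main t)
    have hbsucc : bIter d μ1s μ2s μ10 μ20 (t + 1)
        = (2:ℝ) • ∫ z, (w1 d z (bIter d μ1s μ2s μ10 μ20 t) *
            mix1 d (thetaStar d μ1s μ2s) z) • z := by
      simp only [bIter, hstep]
      module
    rw [hbsucc]
    exact (integral_two_w1_smul (thetaStar d μ1s μ2s) (bIter d μ1s μ2s μ10 μ20 t)).symm
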